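/- For every (u,v) ∈ ℝ², the 4×6 real matrix A(u,v) with rows (2u, 2v, u²+v²−1, 0, 0, 0), (0, 0, 0, 2u, 2v, u²+v²−1), (−u²+v²+1, −2uv, 2u, −2uv, u²−v²+1, 2v), (−2uv, u²−v²+1, 2v, −(−u²+v²+1), 2uv, −2u) has rank exactly 4. -/

import Mathlib

open Matrix

lemma vec6_four (a b c d e f : ℝ) : ![a,b,c,d,e,f] 4 = e := rfl
lemma vec6_five (a b c d e f : ℝ) : ![a,b,c,d,e,f] 5 = f := rfl

lemma rank_eq_four_of_minor {A : Matrix (Fin 4) (Fin 6) ℝ} (c : Fin 4 → Fin 6)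
    (h : (A.submatrix id c).det ≠ 0) : A.rank = 4 := by
  have hP : A.submatrix id c = A * (Matrix.of fun j k => if c k = j then (1:ℝ) else 0) := by
    ext i k
    simp [Matrix.mul_apply, Finset.sum_ite_eq']
  have h4 : (A.submatrix id c).rank = 4 := by
    rw [Matrix.rank_of_isUnit _ ((Matrix.isUnit_iff_isUnit_det _).mpr h.isUnit)]
    simp
  refine le_antisymm ?_ ?_
  · simpa using A.rank_le_card_height
  · calc 4 = (A.submatrix id c).rank := h4.symm
      _ ≤ A.rank := by rw [hP]; exact Matrix.rank_mul_le_left _ _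

/-- The 4×6 matrix of the system (8)–(11) for the stereographic sphere. -/
noncomputable def sphA (u v : ℝ) : Matrix (Fin 4) (Fin 6) ℝ :=
  !![2*u, 2*v, u^2+v^2-1, 0, 0, 0;
     0, 0, 0, 2*u, 2*v, u^2+v^2-1;
     -u^2+v^2+1, -2*u*v, 2*u, -2*u*v, u^2-v^2+1, 2*v;
     -2*u*v, u^2-v^2+1, 2*v, -(-u^2+v^2+1), 2*u*v, -2*u]

theorem sphere_matrix_rank_four (u v : ℝ) : (sphA u v).rank = 4 := by
  by_cases h0 : u = 0 ∧ v = 0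
  · obtain ⟨rfl, rfl⟩ := h0
    apply rank_eq_four_of_minor ![0, 1, 2, 5]
    have he : (sphA 0 0).submatrix id ![0, 1, 2, 5]
        = !![(0:ℝ), 0, -1, 0; 0, 0, 0, -1; 1, 0, 0, 0; 0, 1, 0, 0] := by
      ext i j
      fin_cases i <;> fin_cases j <;> norm_num [sphA, vec6_four, vec6_five, Matrix.cons_val_two]
    rw [he]
    simp [Matrix.det_succ_row_zero, Fin.sum_univ_succ, Fin.succAbove,
      Matrix.cons_val_succ]
  · apply rank_eq_four_of_minor ![0, 1, 3, 4]
    have he : (sphA u v).submatrix id ![0, 1, 3, 4]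
        = !![2*u, 2*v, 0, 0;
             0, 0, 2*u, 2*v;
             -u^2+v^2+1, -2*u*v, -2*u*v, u^2-v^2+1;
             -2*u*v, u^2-v^2+1, -(-u^2+v^2+1), 2*u*v] := by
      ext i j
      fin_cases i <;> fin_cases j <;> norm_num [sphA, vec6_four, vec6_five, Matrix.cons_val_three]
    rw [he]
    have hd : (!![2*u, 2*v, 0, 0;
             0, 0, 2*u, 2*v;
             -u^2+v^2+1, -2*u*v, -2*u*v, u^2-v^2+1;
             -2*u*v, u^2-v^2+1, -(-u^2+v^2+1), 2*u*v]).det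
        = 4 * (u^2 + v^2) * (u^2 + v^2 + 1)^2 := by
      simp [Matrix.det_succ_row_zero, Fin.sum_univ_succ, Fin.succAbove,
        Matrix.cons_val_succ]
      ring
    rw [hd]
    have h1 : u^2 + v^2 > 0 := by
      rcases not_and_or.mp h0 with h | h <;> positivity
    positivity
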